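/- A point y = (y_1,…,y_n) ∈ (ℂ^×)^n satisfies Π_{i=1}^n y_i^{f(v_i)} = 1 for every f ∈ Hom(ℤ^d, ℤ) and Π_{i∈I}(1 − y_i) = 0 for every subset I ⊆ Fin n with I ∉ 𝒮, if and only if y = y(v) for some v ∈ Box(Σ); moreover the assignment v ↦ y(v) is injective on Box(Σ). -/

import Mathlib

open scoped TensorProduct

noncomputable section

namespace ToricStack

/-- The real vector corresponding to an integral lattice point. -/
def toR {d : ℕ} (w : Fin d → ℤ) : Fin d → ℝ := fun j => (w j : ℝ)

/-- The rational vector corresponding to an integral lattice point. -/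
def toQ {d : ℕ} (w : Fin d → ℤ) : Fin d → ℚ := fun j => (w j : ℚ)

/-- cone(S) = nonnegative real span of the `v i`, `i ∈ S`. -/
def cone {d n : ℕ} (v : Fin n → Fin d → ℤ) (S : Finset (Fin n)) : Set (Fin d → ℝ) :=
  {x | ∃ a : Fin n → ℝ, (∀ i, 0 ≤ a i) ∧ (∀ i ∉ S, a i = 0) ∧ x = ∑ i, a i • toR (v i)}

/-- Axioms for the combinatorial data `(v, 𝒮)` encoding a simplicial fan in `ℤ^d` together with
a chosen lattice point on each ray (a reduced stacky fan): `𝒮` contains the empty set and all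
singletons, is downward closed, and each `S ∈ 𝒮` indexes an `ℝ`-linearly independent family;
moreover cones intersect along common faces. -/
def IsStackyFan {d n : ℕ} (v : Fin n → Fin d → ℤ) (𝒮 : Finset (Finset (Fin n))) : Prop :=
  (∀ i, v i ≠ 0) ∧
  (∅ ∈ 𝒮) ∧
  (∀ i, ({i} : Finset (Fin n)) ∈ 𝒮) ∧
  (∀ S ∈ 𝒮, ∀ S' ⊆ S, S' ∈ 𝒮) ∧
  (∀ S ∈ 𝒮, LinearIndependent ℝ (fun i : {i // i ∈ S} => toR (v i))) ∧
  (∀ S ∈ 𝒮, ∀ S' ∈ 𝒮, cone v S ∩ cone v S' = cone v (S ∩ S'))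

/-- Lattice points of the support `|Σ|` of the fan. -/
def suppL {d n : ℕ} (v : Fin n → Fin d → ℤ) (𝒮 : Finset (Finset (Fin n))) :
    Set (Fin d → ℤ) :=
  {w | ∃ S ∈ 𝒮, toR w ∈ cone v S}

/-- Nondegeneracy: the `v i` span `ℚ^d` over `ℚ`. -/
def Nondegenerate {d n : ℕ} (v : Fin n → Fin d → ℤ) : Prop :=
  Submodule.span ℚ (Set.range fun i => toQ (v i)) = ⊤

/-- `w = ∑_{i∈S} α_i v_i` with rational `α_i ∈ [0,1)` supported on `S ∈ 𝒮`,
i.e. a witness that `w ∈ Box(S)`. -/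
def IsBoxRep {d n : ℕ} (v : Fin n → Fin d → ℤ) (𝒮 : Finset (Finset (Fin n)))
    (w : Fin d → ℤ) (S : Finset (Fin n)) (α : Fin n → ℚ) : Prop :=
  S ∈ 𝒮 ∧ (∀ i, 0 ≤ α i ∧ α i < 1) ∧ (∀ i ∉ S, α i = 0) ∧
  (∀ j, (w j : ℚ) = ∑ i, α i * (v i j : ℚ))

/-- `Box(Σ) = ⋃_{S ∈ 𝒮} Box(S)`. -/
def Box {d n : ℕ} (v : Fin n → Fin d → ℤ) (𝒮 : Finset (Finset (Fin n))) :
    Set (Fin d → ℤ) :=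
  {w | ∃ S α, IsBoxRep v 𝒮 w S α}

/-- `S` is (the index set of) the minimal cone of `Σ` containing `w`. -/
def IsMinimalCone {d n : ℕ} (v : Fin n → Fin d → ℤ) (𝒮 : Finset (Finset (Fin n)))
    (w : Fin d → ℤ) (S : Finset (Fin n)) : Prop :=
  S ∈ 𝒮 ∧ toR w ∈ cone v S ∧ ∀ S' ∈ 𝒮, toR w ∈ cone v S' → S ⊆ S'

/-- The point `y(v) ∈ (ℂ^×)^n`: `y(v)_i = exp(2π√-1·α_i)` (which is `1` off the support
of `α`). -/
def yOf {n : ℕ} (α : Fin n → ℚ) : Fin n → ℂ :=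
  fun i => Complex.exp (2 * Real.pi * Complex.I * (α i : ℂ))

/-- The Laurent polynomial ring `ℤ[x_1^{±1},…,x_n^{±1}]`, as the group algebra of `ℤ^n`. -/
abbrev Laur (n : ℕ) := AddMonoidAlgebra ℤ (Fin n →₀ ℤ)

/-- The Laurent variable `x_i`. -/
def lX {n : ℕ} (i : Fin n) : Laur n := AddMonoidAlgebra.single (Finsupp.single i 1) 1

/-- The Laurent monomial `∏_i x_i^{e i}`. -/
def lMon {n : ℕ} (e : Fin n → ℤ) : Laur n :=
  AddMonoidAlgebra.single (Finsupp.equivFunOnFinite.symm e) 1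

/-- The defining relations of the ring `B`: `∏_i x_i^{f(v_i)} − 1` for all linear
`f : ℤ^d → ℤ`, and `∏_{i∈I} (1 − x_i)` for all `I ∉ 𝒮`. -/
def Brels {d n : ℕ} (v : Fin n → Fin d → ℤ) (𝒮 : Finset (Finset (Fin n))) : Set (Laur n) :=
  {x | ∃ f : (Fin d → ℤ) →ₗ[ℤ] ℤ, x = lMon (fun i => f (v i)) - 1} ∪
  {x | ∃ I : Finset (Fin n), I ∉ 𝒮 ∧ x = ∏ i ∈ I, (1 - lX i)}

/-- The ring `B`. -/
abbrev Bring {d n : ℕ} (v : Fin n → Fin d → ℤ) (𝒮 : Finset (Finset (Fin n))) :=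
  Laur n ⧸ Ideal.span (Brels v 𝒮)

/-- `B_ℂ = B ⊗_ℤ ℂ`. -/
abbrev Bc {d n : ℕ} (v : Fin n → Fin d → ℤ) (𝒮 : Finset (Finset (Fin n))) :=
  ℂ ⊗[ℤ] Bring v 𝒮

/-- The class of `x_i` in `B_ℂ`. -/
def xcl {d n : ℕ} (v : Fin n → Fin d → ℤ) (𝒮 : Finset (Finset (Fin n))) (i : Fin n) :
    Bc v 𝒮 :=
  (1 : ℂ) ⊗ₜ[ℤ] (Ideal.Quotient.mk (Ideal.span (Brels v 𝒮)) (lX i))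

/-- The data of the partial semigroup ring `ℂ[N,Σ]`: a commutative `ℂ`-algebra `A`
with basis `[w]` indexed by the lattice points `w` of `|Σ|`, unit `[0]`, and
multiplication `[w₁]·[w₂] = [w₁+w₂]` if `w₁, w₂` lie in a common cone and `0` otherwise. -/
structure PSRData {d n : ℕ} (v : Fin n → Fin d → ℤ) (𝒮 : Finset (Finset (Fin n)))
    (A : Type) [CommRing A] [Algebra ℂ A] where
  e : (Fin d → ℤ) → A
  indep : LinearIndependent ℂ (fun w : suppL v 𝒮 => e w)
  spans : Submodule.span ℂ (e '' suppL v 𝒮) = ⊤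
  one : e 0 = 1
  mul_of_cone : ∀ w₁ ∈ suppL v 𝒮, ∀ w₂ ∈ suppL v 𝒮,
      (∃ S ∈ 𝒮, toR w₁ ∈ cone v S ∧ toR w₂ ∈ cone v S) → e w₁ * e w₂ = e (w₁ + w₂)
  mul_of_not_cone : ∀ w₁ ∈ suppL v 𝒮, ∀ w₂ ∈ suppL v 𝒮,
      (¬ ∃ S ∈ 𝒮, toR w₁ ∈ cone v S ∧ toR w₂ ∈ cone v S) → e w₁ * e w₂ = 0

/-- The ideal `⟨t_1,…,t_d⟩ ⊆ ℂ[N,Σ]`, where `t_j = ∑_i f_j(v_i)·[v_i]` for the coordinate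
functions `f_j`. -/
def tIdeal {d n : ℕ} (v : Fin n → Fin d → ℤ) {A : Type} [CommRing A] [Algebra ℂ A]
    (e : (Fin d → ℤ) → A) : Ideal A :=
  Ideal.span (Set.range fun j : Fin d => ∑ i, ((v i j : ℂ)) • e (v i))

/-- The SR-cohomology ring `H_SR = ℂ[N,Σ]/⟨t_1,…,t_d⟩`. -/
abbrev HSR {d n : ℕ} (v : Fin n → Fin d → ℤ) (A : Type) [CommRing A] [Algebra ℂ A]
    (e : (Fin d → ℤ) → A) := A ⧸ tIdeal v e

/-- The index set `L_v` of rays `j` in the link of the cone `S_v`. -/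
abbrev LinkIdx {n : ℕ} (𝒮 : Finset (Finset (Fin n))) (Sv : Finset (Fin n)) : Type :=
  {j : Fin n // j ∉ Sv ∧ insert j Sv ∈ 𝒮}

/-- The defining relations of the ring `P_v`: monomials `∏_{j∈J} z_j` for `J ⊆ L_v` with
`S_v ∪ J ∉ 𝒮`, and linear forms `∑_{j∈L_v} f(v_j) z_j` for `ℚ`-linear `f` vanishing
on the `v_i`, `i ∈ S_v`. -/
def Prels {d n : ℕ} (v : Fin n → Fin d → ℤ) (𝒮 : Finset (Finset (Fin n)))
    (Sv : Finset (Fin n)) : Set (MvPolynomial (LinkIdx 𝒮 Sv) ℂ) :=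
  {p | ∃ J : Finset (LinkIdx 𝒮 Sv), (Sv ∪ J.image Subtype.val) ∉ 𝒮 ∧
        p = ∏ j ∈ J, MvPolynomial.X j} ∪
  {p | ∃ f : (Fin d → ℚ) →ₗ[ℚ] ℚ, (∀ i ∈ Sv, f (toQ (v i)) = 0) ∧
        p = ∑ j : LinkIdx 𝒮 Sv, MvPolynomial.C ((f (toQ (v (j : Fin n))) : ℂ)) * MvPolynomial.X j}

/-- The ring `P_v` (the Stanley–Reisner presentation of the cohomology of the closed toric
subvariety corresponding to the minimal cone containing `v`). -/
abbrev Pring {d n : ℕ} (v : Fin n → Fin d → ℤ) (𝒮 : Finset (Finset (Fin n)))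
    (Sv : Finset (Fin n)) := MvPolynomial (LinkIdx 𝒮 Sv) ℂ ⧸ Ideal.span (Prels v 𝒮 Sv)

/-! ### Auxiliary lemmas -/

lemma coeff_eq_zero_of_indep {d n : ℕ} {v : Fin n → Fin d → ℤ} {S : Finset (Fin n)}
    (hli : LinearIndependent ℝ (fun i : {i // i ∈ S} => toR (v i)))
    (c : Fin n → ℝ) (hc : ∀ i ∉ S, c i = 0)
    (h : ∀ j, ∑ i, (v i j : ℝ) * c i = 0) : ∀ i, c i = 0 := by
  rw [Fintype.linearIndependent_iff] at hli
  have key : ∀ i : {i // i ∈ S}, c i = 0 := by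
    apply hli (fun i : {i // i ∈ S} => c i)
    have e1 : ∑ i : {i // i ∈ S}, c i • toR (v i) = ∑ i : Fin n, c i • toR (v i) := by
      rw [Finset.sum_coe_sort S (fun i => c i • toR (v i))]
      exact Finset.sum_subset (Finset.subset_univ S)
        (fun i _ hi => by rw [hc i hi, zero_smul])
    rw [e1]
    funext j
    have h2 := h j
    rw [show ∑ i, (v i j : ℝ) * c i = ∑ i, c i * (v i j : ℝ) from
      Finset.sum_congr rfl fun i _ => mul_comm _ _] at h2
    simpa [Finset.sum_apply, toR] using h2
  intro i
  by_cases hi : i ∈ S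
  · exact key ⟨i, hi⟩
  · exact hc i hi

lemma linIndep_Q {d n : ℕ} {v : Fin n → Fin d → ℤ} {S : Finset (Fin n)}
    (hli : LinearIndependent ℝ (fun i : {i // i ∈ S} => toR (v i))) :
    LinearIndependent ℚ (fun i : {i // i ∈ S} => toQ (v i)) := by
  rw [Fintype.linearIndependent_iff] at hli ⊢
  intro g hg i
  have h1 : ∀ j, ∑ i : {i // i ∈ S}, g i * (v i j : ℚ) = 0 := by
    intro j
    have := congrFun hg j
    simpa [Finset.sum_apply, toQ] using this
  have h2 : ∀ i : {i // i ∈ S}, ((g i : ℝ)) = 0 := by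
    apply hli
    funext j
    have := congrArg (fun q : ℚ => (q : ℝ)) (h1 j)
    push_cast at this
    simpa [Finset.sum_apply, toR] using this
  exact_mod_cast h2 i

lemma exists_dual {d : ℕ} {ι : Type} [Fintype ι] [DecidableEq ι] (b : ι → (Fin d → ℚ))
    (hb : LinearIndependent ℚ b) (k : ι) :
    ∃ g : (Fin d → ℚ) →ₗ[ℚ] ℚ, g (b k) = 1 ∧ ∀ i, i ≠ k → g (b i) = 0 := by
  set f : (ι → ℚ) →ₗ[ℚ] (Fin d → ℚ) := Fintype.linearCombination ℚ b with hf
  have hker : LinearMap.ker f = ⊥ := by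
    rw [LinearMap.ker_eq_bot']
    intro c hc
    rw [Fintype.linearIndependent_iff] at hb
    funext i
    exact hb c (by simpa [hf, Fintype.linearCombination_apply] using hc) i
  obtain ⟨g, hg⟩ := f.exists_leftInverse_of_injective hker
  have hgb : ∀ i, g (b i) = Pi.single i 1 := by
    intro i
    have h1 : f (Pi.single i 1) = b i := by
      simp [hf, Fintype.linearCombination_apply_single]
    have h2 : g (f (Pi.single i 1)) = Pi.single i 1 := by
      rw [← LinearMap.comp_apply, hg]; rfl
    rwa [h1] at h2
  refine ⟨(LinearMap.proj k).comp g, ?_, ?_⟩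
  · simp [hgb k]
  · intro i hik
    simp [hgb i, Pi.single_apply, hik, Ne.symm hik]

lemma exp_two_pi_int (k : ℤ) : Complex.exp (2 * Real.pi * Complex.I * (k : ℂ)) = 1 := by
  rw [show (2 * (Real.pi:ℂ) * Complex.I * (k : ℂ)) = (k : ℂ) * (2 * Real.pi * Complex.I) by ring]
  exact Complex.exp_int_mul_two_pi_mul_I k

lemma yOf_eq_one_of_zero {n : ℕ} (α : Fin n → ℚ) (i : Fin n) (h : α i = 0) :
    yOf α i = 1 := by
  simp [yOf, h]

lemma exp_inj_of_box {q q' : ℚ} (h0 : 0 ≤ q) (h1 : q < 1) (h0' : 0 ≤ q') (h1' : q' < 1)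
    (h : Complex.exp (2 * Real.pi * Complex.I * (q : ℂ)) =
         Complex.exp (2 * Real.pi * Complex.I * (q' : ℂ))) : q = q' := by
  rw [Complex.exp_eq_exp_iff_exists_int] at h
  obtain ⟨k, hk⟩ := h
  have hne : (2 * (Real.pi:ℂ) * Complex.I) ≠ 0 := by
    simp [Complex.ext_iff, Real.pi_ne_zero, Complex.I_re, Complex.I_im]
  have h2 : (q : ℂ) = (q' : ℂ) + (k : ℂ) := by
    apply mul_left_cancel₀ hne
    rw [hk]; ring
  have h3 : q = q' + (k : ℚ) := by exact_mod_cast h2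
  have hk1 : (k : ℚ) < 1 := by linarith [h3 ▸ h1, h0']
  have hk2 : (-1 : ℚ) < (k : ℚ) := by linarith [h3 ▸ h0, h1']
  have : k = 0 := by
    have a1 : k < 1 := by exact_mod_cast hk1
    have a2 : -1 < k := by exact_mod_cast hk2
    omega
  rw [h3, this]; simp

lemma box_satisfies {d n : ℕ} (v : Fin n → Fin d → ℤ) (𝒮 : Finset (Finset (Fin n)))
    (hdown : ∀ S ∈ 𝒮, ∀ S' ⊆ S, S' ∈ 𝒮)
    {w : Fin d → ℤ} {S : Finset (Fin n)} {α : Fin n → ℚ}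
    (hrep : IsBoxRep v 𝒮 w S α) :
    (∀ f : (Fin d → ℤ) →ₗ[ℤ] ℤ, ∏ i, yOf α i ^ f (v i) = 1) ∧
    (∀ I : Finset (Fin n), I ∉ 𝒮 → ∏ i ∈ I, (1 - yOf α i) = 0) := by
  obtain ⟨hS, hbd, hsupp, hsum⟩ := hrep
  constructor
  · intro f
    have hfeq : ∀ u : Fin d → ℤ, f u = ∑ j, u j * f (fun j' => if j = j' then 1 else 0) := by
      intro u
      simpa [smul_eq_mul] using LinearMap.pi_apply_eq_sum_univ f u
    have key : ∑ i, (f (v i) : ℚ) * α i = ((f w : ℤ) : ℚ) := by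
      calc ∑ i, (f (v i) : ℚ) * α i
          = ∑ i, ∑ j, ((f (fun j' => if j = j' then 1 else 0) : ℚ) * ((v i j : ℚ) * α i)) := by
            refine Finset.sum_congr rfl fun i _ => ?_
            have := hfeq (v i)
            have hc := congrArg (fun z : ℤ => (z : ℚ)) this
            push_cast at hc
            rw [hc, Finset.sum_mul]
            exact Finset.sum_congr rfl fun j _ => by ring
        _ = ∑ j, (f (fun j' => if j = j' then 1 else 0) : ℚ) * ∑ i, α i * (v i j : ℚ) := by
            rw [Finset.sum_comm]
            refine Finset.sum_congr rfl fun j _ => ?_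
            rw [Finset.mul_sum]
            exact Finset.sum_congr rfl fun i _ => by ring
        _ = ∑ j, (f (fun j' => if j = j' then 1 else 0) : ℚ) * (w j : ℚ) := by
            refine Finset.sum_congr rfl fun j _ => by rw [← hsum j]
        _ = ((f w : ℤ) : ℚ) := by
            rw [hfeq w]
            push_cast
            exact Finset.sum_congr rfl fun j _ => by ring
    calc ∏ i, yOf α i ^ f (v i)
        = ∏ i, Complex.exp ((f (v i) : ℂ) * (2 * Real.pi * Complex.I * (α i : ℂ))) := by
          refine Finset.prod_congr rfl fun i _ => ?_
          rw [Complex.exp_int_mul]; rfl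
      _ = Complex.exp (∑ i, (f (v i) : ℂ) * (2 * Real.pi * Complex.I * (α i : ℂ))) := by
          rw [Complex.exp_sum]
      _ = Complex.exp (2 * Real.pi * Complex.I * ((f w : ℤ) : ℂ)) := by
          congr 1
          have hc : ((∑ i, (f (v i) : ℚ) * α i : ℚ) : ℂ) = (((f w : ℤ) : ℚ) : ℂ) := by
            exact_mod_cast congrArg (fun q : ℚ => (q : ℂ)) key
          push_cast at hc ⊢
          rw [← hc, Finset.mul_sum]
          exact Finset.sum_congr rfl fun i _ => by ring
      _ = 1 := exp_two_pi_int (f w)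
  · intro I hI
    have hIS : ¬ I ⊆ S := fun hsub => hI (hdown S hS I hsub)
    obtain ⟨i, hiI, hiS⟩ := Finset.not_subset.mp hIS
    exact Finset.prod_eq_zero hiI (by rw [yOf_eq_one_of_zero α i (hsupp i hiS)]; ring)

theorem solutions_are_box_points
    (d n : ℕ) (hd : 0 < d) (hn : 0 < n)
    (v : Fin n → Fin d → ℤ) (𝒮 : Finset (Finset (Fin n)))
    (hfan : IsStackyFan v 𝒮) (hnd : Nondegenerate v) :
    (∀ y : Fin n → ℂ, (∀ i, y i ≠ 0) →
      (((∀ f : (Fin d → ℤ) →ₗ[ℤ] ℤ, ∏ i, y i ^ f (v i) = 1) ∧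
        (∀ I : Finset (Fin n), I ∉ 𝒮 → ∏ i ∈ I, (1 - y i) = 0)) ↔
       (∃ (w : Fin d → ℤ) (S : Finset (Fin n)) (α : Fin n → ℚ),
          IsBoxRep v 𝒮 w S α ∧ IsMinimalCone v 𝒮 w S ∧ y = yOf α))) ∧
    (∀ (w w' : Fin d → ℤ) (S S' : Finset (Fin n)) (α α' : Fin n → ℚ),
      IsBoxRep v 𝒮 w S α → IsMinimalCone v 𝒮 w S →
      IsBoxRep v 𝒮 w' S' α' → IsMinimalCone v 𝒮 w' S' →
      yOf α = yOf α' → w = w') := by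
  classical
  obtain ⟨hv0, hempty, hsingle, hdown, hindep, hglue⟩ := hfan
  constructor
  · intro y hy0
    constructor
    · rintro ⟨hA, hB⟩
      set T : Finset (Fin n) := Finset.univ.filter (fun i => y i ≠ 1) with hTdef
      have hmemT : ∀ i, i ∈ T ↔ y i ≠ 1 := by intro i; simp [hTdef]
      have hTS : T ∈ 𝒮 := by
        by_contra hTn
        obtain ⟨i, hiT, hyi⟩ := Finset.prod_eq_zero_iff.mp (hB T hTn)
        exact (hmemT i).mp hiT (sub_eq_zero.mp hyi).symm
      set z : Fin n → ℂ := fun i => Complex.log (y i) with hzdef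
      have hyz : ∀ i, Complex.exp (z i) = y i := fun i => Complex.exp_log (hy0 i)
      have hzT : ∀ i ∉ T, z i = 0 := by
        intro i hi
        have hy1 : y i = 1 := by by_contra h; exact hi ((hmemT i).mpr h)
        simp [hzdef, hy1]
      have hcoord : ∀ j, ∃ m : ℤ, ∑ i, (v i j : ℂ) * z i = (m : ℂ) * (2 * Real.pi * Complex.I) := by
        intro j
        rw [← Complex.exp_eq_one_iff, Complex.exp_sum]
        calc ∏ i, Complex.exp ((v i j : ℂ) * z i) = ∏ i, y i ^ (v i j) := by
              refine Finset.prod_congr rfl fun i _ => ?_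
              rw [Complex.exp_int_mul, hyz]
          _ = 1 := by simpa using hA (LinearMap.proj j)
      choose m hm using hcoord
      have hre : ∀ i, (z i).re = 0 := by
        apply coeff_eq_zero_of_indep (hindep T hTS) (fun i => (z i).re)
          (fun i hi => by simp only [hzT i hi, Complex.zero_re])
        intro j
        have h1 := congrArg Complex.re (hm j)
        simpa [Complex.re_sum, Complex.mul_re, Complex.mul_im, Complex.I_re, Complex.I_im]
          using h1
      have him : ∀ j, ∑ i, (v i j : ℝ) * (z i).im = (m j : ℝ) * (2 * Real.pi) := by
        intro j
        have h1 := congrArg Complex.im (hm j)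
        simpa [Complex.im_sum, Complex.mul_re, Complex.mul_im, Complex.I_re, Complex.I_im]
          using h1
      -- dual functionals give rationality
      have hliQ := linIndep_Q (hindep T hTS)
      choose g hg1 hg2 using fun k => exists_dual (fun i : {i // i ∈ T} => toQ (v i)) hliQ k
      set q : Fin n → ℚ := fun i => if h : i ∈ T then g ⟨i, h⟩ (fun j => (m j : ℚ)) else 0 with hqdef
      have hqT : ∀ i ∉ T, q i = 0 := by intro i hi; simp [hqdef, hi]
      have hkey : ∀ i, (z i).im = 2 * Real.pi * ((q i : ℝ)) := by
        intro i
        by_cases hiT : i ∈ T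
        · have hq : q i = g ⟨i, hiT⟩ (fun j => (m j : ℚ)) := by simp [hqdef, hiT]
          set k : {i // i ∈ T} := ⟨i, hiT⟩ with hkdef
          set γ : Fin d → ℚ := fun j => g k (fun j' => if j = j' then 1 else 0) with hγ
          have hgx : ∀ x : Fin d → ℚ, g k x = ∑ j, x j * γ j := by
            intro x; simpa [smul_eq_mul, hγ] using LinearMap.pi_apply_eq_sum_univ (g k) x
          have main : ∑ j, (γ j : ℝ) * (∑ i', (v i' j : ℝ) * (z i').im)
              = ∑ j, (γ j : ℝ) * ((m j : ℝ) * (2 * Real.pi)) :=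
            Finset.sum_congr rfl fun j _ => by rw [him j]
          have lhs1 : ∑ j, (γ j : ℝ) * (∑ i', (v i' j : ℝ) * (z i').im)
              = ∑ i', (z i').im * ((g k (toQ (v i')) : ℝ)) := by
            calc ∑ j, (γ j : ℝ) * (∑ i', (v i' j : ℝ) * (z i').im)
                = ∑ j, ∑ i', (z i').im * ((v i' j : ℝ) * (γ j : ℝ)) := by
                  refine Finset.sum_congr rfl fun j _ => ?_
                  rw [Finset.mul_sum]; exact Finset.sum_congr rfl fun i' _ => by ring
              _ = ∑ i', ∑ j, (z i').im * ((v i' j : ℝ) * (γ j : ℝ)) := Finset.sum_comm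
              _ = ∑ i', (z i').im * ((g k (toQ (v i')) : ℝ)) := by
                  refine Finset.sum_congr rfl fun i' _ => ?_
                  rw [← Finset.mul_sum]
                  congr 1
                  rw [hgx (toQ (v i'))]
                  push_cast [toQ]
                  rfl
          have lhs2 : ∑ i', (z i').im * ((g k (toQ (v i')) : ℝ)) = (z i).im := by
            rw [Finset.sum_eq_single i]
            · rw [show g k (toQ (v i)) = 1 from hg1 k]; simp
            · intro i' _ hne
              by_cases hi'T : i' ∈ T
              · rw [hg2 k ⟨i', hi'T⟩ (fun he => hne (by simpa [hkdef] using congrArg Subtype.val he))]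
                simp
              · rw [hzT i' hi'T]; simp
            · intro habs; exact absurd (Finset.mem_univ i) habs
          have rhs1 : ∑ j, (γ j : ℝ) * ((m j : ℝ) * (2 * Real.pi)) = 2 * Real.pi * ((q i : ℝ)) := by
            rw [hq, hgx]
            push_cast
            rw [Finset.mul_sum]
            exact Finset.sum_congr rfl fun j _ => by ring
          rw [← lhs2, ← lhs1, main, rhs1]
        · rw [hzT i hiT]; simp [hqT i hiT]
      have hqm : ∀ j, ∑ i, q i * (v i j : ℚ) = (m j : ℚ) := by
        intro j
        have hπ : (2 * Real.pi) ≠ 0 := by positivity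
        have hr : (2 * Real.pi) * (∑ i, (q i : ℝ) * (v i j : ℝ)) = (2 * Real.pi) * (m j : ℝ) := by
          calc (2 * Real.pi) * (∑ i, (q i : ℝ) * (v i j : ℝ))
              = ∑ i, (v i j : ℝ) * (z i).im := by
                rw [Finset.mul_sum]
                exact Finset.sum_congr rfl fun i _ => by rw [hkey i]; ring
            _ = (m j : ℝ) * (2 * Real.pi) := him j
            _ = (2 * Real.pi) * (m j : ℝ) := by ring
        have hr2 : ∑ i, (q i : ℝ) * (v i j : ℝ) = (m j : ℝ) := mul_left_cancel₀ hπ hr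
        have hr3 : ((∑ i, q i * (v i j : ℚ) : ℚ) : ℝ) = (((m j : ℚ)) : ℝ) := by
          push_cast
          exact hr2
        exact_mod_cast hr3
      set α : Fin n → ℚ := fun i => Int.fract (q i) with hαdef
      have hα0 : ∀ i ∉ T, α i = 0 := by
        intro i hi; simp [hαdef, hqT i hi]
      set w : Fin d → ℤ := fun j => m j - ∑ i, ⌊q i⌋ * v i j with hwdef
      have hwsum : ∀ j, (w j : ℚ) = ∑ i, α i * (v i j : ℚ) := by
        intro j
        have e1 : ∑ i, α i * (v i j : ℚ) = ∑ i, (q i * (v i j : ℚ) - (⌊q i⌋ : ℚ) * (v i j : ℚ)) := by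
          refine Finset.sum_congr rfl fun i _ => ?_
          rw [hαdef]
          show Int.fract (q i) * _ = _
          rw [Int.fract]
          ring
        rw [e1, Finset.sum_sub_distrib, hqm j]
        simp only [hwdef]
        push_cast
        ring
      have hboxrep : IsBoxRep v 𝒮 w T α :=
        ⟨hTS, fun i => ⟨Int.fract_nonneg _, Int.fract_lt_one _⟩, hα0, hwsum⟩
      have hyα : y = yOf α := by
        funext i
        have hαc : (α i : ℂ) = (q i : ℂ) - (⌊q i⌋ : ℂ) := by
          rw [hαdef]
          show ((Int.fract (q i) : ℚ) : ℂ) = _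
          rw [Int.fract]
          push_cast
          ring
        have e1 : yOf α i = Complex.exp (2 * Real.pi * Complex.I * (q i : ℂ)) := by
          show Complex.exp _ = _
          rw [show (2 * (Real.pi : ℂ) * Complex.I * ((α i) : ℂ))
              = 2 * Real.pi * Complex.I * (q i : ℂ) - (⌊q i⌋ : ℂ) * (2 * Real.pi * Complex.I) by
            rw [hαc]; ring]
          rw [Complex.exp_sub, Complex.exp_int_mul_two_pi_mul_I, div_one]
        have e2 : y i = Complex.exp (2 * Real.pi * Complex.I * (q i : ℂ)) := by
          rw [← hyz i]
          congr 1
          have h1 := Complex.re_add_im (z i)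
          rw [hre i, hkey i] at h1
          rw [← h1]
          push_cast
          ring
        rw [e2, e1]
      have hweq : toR w = ∑ i, ((α i : ℝ)) • toR (v i) := by
        funext j
        have h2 : ((w j : ℚ) : ℝ) = ((∑ i, α i * (v i j : ℚ) : ℚ) : ℝ) := by
          exact_mod_cast congrArg (fun x : ℚ => (x : ℝ)) (hwsum j)
        push_cast at h2
        simpa [toR, Finset.sum_apply] using h2
      have hconeT : toR w ∈ cone v T :=
        ⟨fun i => ((α i : ℝ)),
         fun i => by show (0:ℝ) ≤ ((α i : ℝ)); exact_mod_cast Int.fract_nonneg (q i),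
         fun i hi => by show ((α i : ℝ)) = 0; rw [hα0 i hi]; simp, hweq⟩
      have hαpos : ∀ i ∈ T, α i ≠ 0 := by
        intro i hiT hzero
        have : y i = 1 := by rw [hyα, yOf_eq_one_of_zero α i hzero]
        exact (hmemT i).mp hiT this
      have hmin : IsMinimalCone v 𝒮 w T := by
        refine ⟨hTS, hconeT, ?_⟩
        intro S' hS' hw'
        have hint : toR w ∈ cone v (T ∩ S') := by
          rw [← hglue T hTS S' hS']; exact ⟨hconeT, hw'⟩
        obtain ⟨b, hb0, hbs, hbw⟩ := hint
        have hab : ∀ i, ((α i : ℝ)) - b i = 0 := by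
          apply coeff_eq_zero_of_indep (hindep T hTS)
          · intro i hi
            rw [hα0 i hi, hbs i (fun hmem => hi (Finset.mem_inter.mp hmem).1)]
            simp
          · intro j
            have e1 : ∑ i, (v i j : ℝ) * ((α i : ℝ)) = toR w j := by
              have := congrFun hweq j
              simp only [Finset.sum_apply, Pi.smul_apply, smul_eq_mul] at this
              rw [this]
              exact Finset.sum_congr rfl fun i _ => mul_comm _ _
            have e2 : ∑ i, (v i j : ℝ) * b i = toR w j := by
              have := congrFun hbw j
              simp only [Finset.sum_apply, Pi.smul_apply, smul_eq_mul] at this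
              rw [this]
              exact Finset.sum_congr rfl fun i _ => mul_comm _ _
            calc ∑ i, (v i j : ℝ) * ((α i : ℝ) - b i)
                = ∑ i, (v i j : ℝ) * (α i : ℝ) - ∑ i, (v i j : ℝ) * b i := by
                  rw [← Finset.sum_sub_distrib]
                  exact Finset.sum_congr rfl fun i _ => by ring
              _ = 0 := by rw [e1, e2, sub_self]
        intro i hiT
        by_contra hiS'
        have hbz : b i = 0 := hbs i (fun hmem => hiS' (Finset.mem_inter.mp hmem).2)
        have : ((α i : ℝ)) = 0 := by have := hab i; rw [hbz] at this; linarith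
        exact hαpos i hiT (by exact_mod_cast this)
      exact ⟨w, T, α, hboxrep, hmin, hyα⟩
    · rintro ⟨w, S, α, hrep, hmin, rfl⟩
      exact box_satisfies v 𝒮 hdown hrep
  · intro w w' S S' α α' hrep hminc hrep' hminc' hyy
    funext j
    have hαα : ∀ i, α i = α' i := by
      intro i
      have hpt := congrFun hyy i
      exact exp_inj_of_box (hrep.2.1 i).1 (hrep.2.1 i).2 (hrep'.2.1 i).1 (hrep'.2.1 i).2
        (by simpa [yOf] using hpt)
    have h1 := hrep.2.2.2 j
    have h2 := hrep'.2.2.2 j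
    have hq : (w j : ℚ) = (w' j : ℚ) := by
      rw [h1, h2]; exact Finset.sum_congr rfl fun i _ => by rw [hαα i]
    exact_mod_cast hq

end ToricStack
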